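/- Let Ω ⊂ ℝ be an open interval, and suppose u, v ∈ L²(Ω) with u ≥ v a.e. in Ω. Let J_λ u, J_λ v ∈ H²(Ω) ∩ H¹₀(Ω) satisfy J_λ u + λ(-Δ(J_λ u) + (J_λ u)³) = u and J_λ v + λ(-Δ(J_λ v) + (J_λ v)³) = v in L²(Ω), for λ > 0. Then J_λ u ≥ J_λ v a.e. in Ω. -/

import Mathlib

open MeasureTheory

/-- Order-preserving property of the resolvent `J_λ = (I + λ(-Δ + (·)³))⁻¹` with
homogeneous Dirichlet conditions on the interval `Ω = (a,b)`. -/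
theorem stmt_17 (a b : ℝ) (hab : a < b) (lam : ℝ) (hlam : 0 < lam)
    (u v : ℝ → ℝ)
    (huv : ∀ᵐ x ∂(volume.restrict (Set.Ioo a b)), v x ≤ u x)
    (U U' U'' V V' V'' : ℝ → ℝ)
    -- `U = J_lam u` and `V = J_lam v` belong to `H²(a,b) ∩ H¹₀(a,b)`
    (hUc : ContinuousOn U (Set.Icc a b)) (hVc : ContinuousOn V (Set.Icc a b))
    (hUa : U a = 0) (hUb : U b = 0) (hVa : V a = 0) (hVb : V b = 0)
    (hUd : ∀ x ∈ Set.Ioo a b, HasDerivAt U (U' x) x ∧ HasDerivAt U' (U'' x) x)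
    (hVd : ∀ x ∈ Set.Ioo a b, HasDerivAt V (V' x) x ∧ HasDerivAt V' (V'' x) x)
    (hU2 : MemLp U 2 (volume.restrict (Set.Ioo a b)))
    (hV2 : MemLp V 2 (volume.restrict (Set.Ioo a b)))
    (hU''2 : MemLp U'' 2 (volume.restrict (Set.Ioo a b)))
    (hV''2 : MemLp V'' 2 (volume.restrict (Set.Ioo a b)))
    -- the resolvent equations
    (heqU : ∀ x ∈ Set.Ioo a b, U x + lam * (-(U'' x) + (U x) ^ 3) = u x)
    (heqV : ∀ x ∈ Set.Ioo a b, V x + lam * (-(V'' x) + (V x) ^ 3) = v x) :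
    ∀ᵐ x ∂(volume.restrict (Set.Ioo a b)), V x ≤ U x := by
  -- Work with the difference W = V - U.
  set W : ℝ → ℝ := fun x => V x - U x with hW
  set W' : ℝ → ℝ := fun x => V' x - U' x with hW'
  set W'' : ℝ → ℝ := fun x => V'' x - U'' x with hW''
  have hWc : ContinuousOn W (Set.Icc a b) := hVc.sub hUc
  have hWd : ∀ x ∈ Set.Ioo a b, HasDerivAt W (W' x) x :=
    fun x hx => ((hVd x hx).1.sub (hUd x hx).1)
  have hW'd : ∀ x ∈ Set.Ioo a b, HasDerivAt W' (W'' x) x :=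
    fun x hx => ((hVd x hx).2.sub (hUd x hx).2)
  have hWa : W a = 0 := by simp [hW, hVa, hUa]
  have hWb : W b = 0 := by simp [hW, hVb, hUb]
  -- It suffices to prove the pointwise inequality on (a,b).
  have key : ∀ x₀ ∈ Set.Ioo a b, W x₀ ≤ 0 := by
    intro x₀ hx₀
    by_contra hpos
    push_neg at hpos
    -- `c` : last zero of W before x₀
    set S : Set ℝ := Set.Icc a x₀ ∩ W ⁻¹' Set.Iic 0 with hS
    have hSsub : S ⊆ Set.Icc a x₀ := Set.inter_subset_left
    have hScl : IsClosed S :=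
      (hWc.mono (Set.Icc_subset_Icc le_rfl hx₀.2.le)).preimage_isClosed_of_isClosed
        isClosed_Icc isClosed_Iic
    have haS : a ∈ S := ⟨⟨le_rfl, hx₀.1.le⟩, by simp [hWa]⟩
    have hScomp : IsCompact S := isCompact_Icc.of_isClosed_subset hScl hSsub
    have hcS : sSup S ∈ S := hScomp.sSup_mem ⟨a, haS⟩
    set c : ℝ := sSup S with hc
    obtain ⟨⟨hac, hcx₀le⟩, hWcle⟩ := hcS
    have hcx₀ : c < x₀ := lt_of_le_of_ne hcx₀le (by
      intro h; rw [h] at hWcle; exact absurd hWcle (by simpa using hpos.not_ge))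
    have hpos1 : ∀ x ∈ Set.Ioc c x₀, 0 < W x := by
      intro x hx
      by_contra hle
      push_neg at hle
      have hxS : x ∈ S := ⟨⟨hac.trans hx.1.le, hx.2⟩, hle⟩
      exact absurd (le_csSup hScomp.bddAbove hxS) (not_le.mpr hx.1)
    -- `d` : first zero of W after x₀
    set T : Set ℝ := Set.Icc x₀ b ∩ W ⁻¹' Set.Iic 0 with hT
    have hTsub : T ⊆ Set.Icc x₀ b := Set.inter_subset_left
    have hTcl : IsClosed T :=
      (hWc.mono (Set.Icc_subset_Icc hx₀.1.le le_rfl)).preimage_isClosed_of_isClosed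
        isClosed_Icc isClosed_Iic
    have hbT : b ∈ T := ⟨⟨hx₀.2.le, le_rfl⟩, by simp [hWb]⟩
    have hTcomp : IsCompact T := isCompact_Icc.of_isClosed_subset hTcl hTsub
    have hdT : sInf T ∈ T := hTcomp.sInf_mem ⟨b, hbT⟩
    set d : ℝ := sInf T with hd
    obtain ⟨⟨hx₀dle, hdb⟩, hWdle⟩ := hdT
    have hx₀d : x₀ < d := lt_of_le_of_ne hx₀dle (by
      intro h; rw [← h] at hWdle; exact absurd hWdle (by simpa using hpos.not_ge))
    have hpos2 : ∀ x ∈ Set.Ico x₀ d, 0 < W x := by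
      intro x hx
      rcases eq_or_lt_of_le hx.1 with h | h
      · rwa [← h]
      by_contra hle
      push_neg at hle
      have hxT : x ∈ T := ⟨⟨hx.1, hx.2.le.trans hdb⟩, hle⟩
      exact absurd (csInf_le hTcomp.bddBelow hxT) (not_le.mpr hx.2)
    have hposcd : ∀ x ∈ Set.Ioo c d, 0 < W x := by
      intro x hx
      rcases le_or_gt x x₀ with h | h
      · exact hpos1 x ⟨hx.1, h⟩
      · exact hpos2 x ⟨h.le, hx.2⟩
    -- boundary values
    have hsubIcc : Set.Icc c d ⊆ Set.Icc a b := Set.Icc_subset_Icc hac hdb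
    have hsubIoo : Set.Ioo c d ⊆ Set.Ioo a b := fun y hy =>
      ⟨lt_of_le_of_lt hac hy.1, lt_of_lt_of_le hy.2 hdb⟩
    -- Mean value theorem on [c, x₀]
    obtain ⟨s, hs, hWs⟩ := exists_hasDerivAt_eq_slope W W' hcx₀
      (hWc.mono (Set.Icc_subset_Icc hac hx₀.2.le))
      (fun x hx => hWd x ⟨lt_of_le_of_lt hac hx.1, hx.2.trans hx₀.2⟩)
    -- Mean value theorem on [x₀, d]
    obtain ⟨t, ht, hWt⟩ := exists_hasDerivAt_eq_slope W W' hx₀d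
      (hWc.mono (Set.Icc_subset_Icc hx₀.1.le hdb))
      (fun x hx => hWd x ⟨hx₀.1.trans hx.1, lt_of_lt_of_le hx.2 hdb⟩)
    -- W c = 0 and W d = 0 (by continuity from inside)
    have hWc0 : W c = 0 := by
      refine le_antisymm hWcle ?_
      have hneb : (nhdsWithin c (Set.Ioo c x₀)).NeBot := by
        rw [← mem_closure_iff_nhdsWithin_neBot, closure_Ioo hcx₀.ne]
        exact ⟨le_rfl, hcx₀.le⟩
      have hcw : ContinuousWithinAt W (Set.Ioo c x₀) c :=
        (hWc c ⟨hac, hcx₀le.trans hx₀.2.le⟩).mono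
          (fun y hy => ⟨hac.trans hy.1.le, hy.2.le.trans hx₀.2.le⟩)
      exact ge_of_tendsto hcw
        (eventually_mem_nhdsWithin.mono (fun x (hx : x ∈ Set.Ioo c x₀) =>
          (hpos1 x ⟨hx.1, hx.2.le⟩).le))
    have hWd0 : W d = 0 := by
      refine le_antisymm hWdle ?_
      have hneb : (nhdsWithin d (Set.Ioo x₀ d)).NeBot := by
        rw [← mem_closure_iff_nhdsWithin_neBot, closure_Ioo hx₀d.ne]
        exact ⟨hx₀d.le, le_rfl⟩
      have hcw : ContinuousWithinAt W (Set.Ioo x₀ d) d :=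
        (hWc d ⟨hac.trans (hcx₀.le.trans hx₀dle), hdb⟩).mono
          (fun y hy => ⟨hx₀.1.le.trans hy.1.le, hy.2.le.trans hdb⟩)
      exact ge_of_tendsto hcw
        (eventually_mem_nhdsWithin.mono (fun x (hx : x ∈ Set.Ioo x₀ d) =>
          (hpos2 x ⟨hx.1.le, hx.2⟩).le))
    -- slopes
    have hWspos : 0 < W' s := by
      rw [hWs, hWc0]
      have : 0 < (W x₀ - 0) / (x₀ - c) := div_pos (by linarith) (by linarith)
      linarith
    have hWtneg : W' t < 0 := by
      rw [hWt, hWd0]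
      have : (0 - W x₀) / (d - x₀) < 0 :=
        div_neg_of_neg_of_pos (by linarith) (by linarith)
      linarith
    have hst : s < t := hs.2.trans ht.1
    -- interval [s,t] sits inside (c,d) and (a,b)
    have hstIoo : Set.Icc s t ⊆ Set.Ioo c d := fun y hy =>
      ⟨lt_of_lt_of_le hs.1 hy.1, lt_of_le_of_lt hy.2 ht.2⟩
    have hstab : Set.Icc s t ⊆ Set.Ioo a b := fun y hy => hsubIoo (hstIoo hy)
    -- integrability of W'' on [s,t]
    haveI hfin : IsFiniteMeasure (volume.restrict (Set.Ioo a b)) := by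
      constructor
      rw [Measure.restrict_apply_univ, Real.volume_Ioo]
      exact ENNReal.ofReal_lt_top
    have hint : IntegrableOn W'' (Set.Ioo a b) volume :=
      (hV''2.sub hU''2).integrable (by norm_num)
    have hintst : IntervalIntegrable W'' volume s t := by
      rw [intervalIntegrable_iff, Set.uIoc_of_le hst.le]
      exact hint.mono_set (fun y hy => hstab ⟨hy.1.le, hy.2⟩)
    -- FTC: ∫_s^t W'' = W' t - W' s
    have hFTC : ∫ y in s..t, W'' y = W' t - W' s :=
      intervalIntegral.integral_eq_sub_of_hasDerivAt
        (fun x hx => hW'd x (hstab (by rwa [Set.uIcc_of_le hst.le] at hx))) hintst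
    -- a.e. nonnegativity of W'' on (s,t)
    have hae : 0 ≤ᵐ[volume.restrict (Set.Icc s t)] W'' := by
      have hmono : volume.restrict (Set.Icc s t) ≤ volume.restrict (Set.Ioo a b) :=
        Measure.restrict_mono hstab le_rfl
      have huv' : ∀ᵐ x ∂(volume.restrict (Set.Icc s t)), v x ≤ u x :=
        Filter.Eventually.filter_mono (ae_mono hmono) huv
      filter_upwards [huv', ae_restrict_mem measurableSet_Icc] with x hvu hx
      have hxab : x ∈ Set.Ioo a b := hstab hx
      have hxcd : x ∈ Set.Ioo c d := hstIoo hx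
      have hwx : 0 < W x := hposcd x hxcd
      have hUV : U x < V x := by simpa [hW, sub_pos] using hwx
      have hcube : U x ^ 3 ≤ V x ^ 3 := by
        nlinarith [sq_nonneg (U x + V x), sq_nonneg (U x - V x), sq_nonneg (V x)]
      have heU := heqU x hxab
      have heV := heqV x hxab
      have hmul : 0 ≤ lam * (V'' x - U'' x) := by
        have h1 : lam * (V'' x - U'' x)
            = (V x - U x) + lam * (V x ^ 3 - U x ^ 3) + (u x - v x) := by linarith
        have h2 : 0 ≤ lam * (V x ^ 3 - U x ^ 3) :=
          mul_nonneg hlam.le (by linarith)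
        linarith
      show (0 : ℝ) ≤ W'' x
      simp only [hW'']
      nlinarith [hmul, hlam]
    have hint_nonneg : 0 ≤ ∫ y in s..t, W'' y :=
      intervalIntegral.integral_nonneg_of_ae_restrict hst.le hae
    rw [hFTC] at hint_nonneg
    linarith
  filter_upwards [ae_restrict_mem measurableSet_Ioo] with x hx
  have := key x hx
  simp only [hW] at this
  linarith
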